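/- Assume the Continuum Hypothesis. Let C be a nonmeager separable metrizable topological group, let B be a separable metrizable topological group, and let f : C → B be a surjective Borel group homomorphism. Then B is generated by a subspace X ⊆ B having the Menger property Ufin(O,O). -/

import Mathlib

open Set Filter Topology

universe u

/-- `c` is an open cover of the space `X`. -/
def IsOpenCover {X : Type u} [TopologicalSpace X] (c : Set (Set X)) : Prop :=
  (∀ U ∈ c, IsOpen U) ∧ ⋃₀ c = Set.univ

/-- The Menger property `Ufin(O,O)`. -/
def MengerProp (X : Type u) [TopologicalSpace X] : Prop :=
  ∀ c : ℕ → Set (Set X), (∀ n, IsOpenCover (c n)) →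
    ∃ v : ℕ → Set (Set X), (∀ n, v n ⊆ c n ∧ (v n).Finite) ∧
      ∀ x : X, ∃ n : ℕ, x ∈ ⋃₀ v n



/-- continuous surjective image of a Menger space is Menger -/
lemma MengerProp.image {Y Z : Type*} [TopologicalSpace Y] [TopologicalSpace Z]
    {g : Y → Z} (hg : Continuous g) (hs : Function.Surjective g)
    (hY : MengerProp Y) : MengerProp Z := by
  intro c hc
  set c' : ℕ → Set (Set Y) := fun n => (fun s => g ⁻¹' s) '' c n with hc'
  have hc'cov : ∀ n, IsOpenCover (c' n) := by
    intro n
    constructor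
    · rintro U ⟨s, hs', rfl⟩
      exact ((hc n).1 s hs').preimage hg
    · apply eq_univ_of_forall
      intro y
      have : g y ∈ ⋃₀ c n := (hc n).2 ▸ mem_univ _
      obtain ⟨s, hs', hgy⟩ := this
      exact ⟨g ⁻¹' s, ⟨s, hs', rfl⟩, hgy⟩
  obtain ⟨v', hv', hcov⟩ := hY c' hc'cov
  refine ⟨fun n => {s ∈ c n | g ⁻¹' s ∈ v' n}, fun n => ⟨fun s hs' => hs'.1, ?_⟩, ?_⟩
  · have hinj : Function.Injective (fun s : Set Z => g ⁻¹' s) :=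
      Function.Surjective.preimage_injective hs
    apply Set.Finite.of_finite_image _ (hinj.injOn)
    exact (hv' n).2.subset (by rintro _ ⟨s, hs', rfl⟩; exact hs'.2)
  · intro z
    obtain ⟨y, rfl⟩ := hs z
    obtain ⟨n, t, htv, hyt⟩ := hcov y
    obtain ⟨s, hsc, rfl⟩ := (hv' n).1 htv
    exact ⟨n, s, ⟨hsc, htv⟩, hyt⟩

/-- a set concentrated on a countable subset of itself is Menger -/
lemma mengerProp_of_concentrated {Y : Type*} [TopologicalSpace Y] (X : Set Y)
    (d : ℕ → Y) (hd : ∀ k, d k ∈ X)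
    (hconc : ∀ U : Set Y, IsOpen U → (∀ k, d k ∈ U) → (X \ U).Countable) :
    MengerProp ↥X := by
  intro c hc
  -- choose, for each n and each point p of X, a member of c n containing p
  have hsel : ∀ (n : ℕ) (p : ↥X), ∃ s, s ∈ c n ∧ p ∈ s := by
    intro n p
    have : p ∈ ⋃₀ c n := (hc n).2 ▸ mem_univ _
    obtain ⟨s, hs, hps⟩ := this
    exact ⟨s, hs, hps⟩
  choose S hS1 hS2 using hsel
  -- choose open extensions of the S (2k) (d k)
  have hext : ∀ k : ℕ, ∃ O : Set Y, IsOpen O ∧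
      Subtype.val ⁻¹' O = S (2 * k) ⟨d k, hd k⟩ := by
    intro k
    have := (hc (2 * k)).1 _ (hS1 (2 * k) ⟨d k, hd k⟩)
    rwa [isOpen_induced_iff] at this
  choose O hO1 hO2 using hext
  set U : Set Y := ⋃ k, O k with hU
  have hUopen : IsOpen U := isOpen_iUnion hO1
  have hdU : ∀ k, d k ∈ U := by
    intro k
    have : (⟨d k, hd k⟩ : ↥X) ∈ Subtype.val ⁻¹' O k := by
      rw [hO2]; exact hS2 (2 * k) ⟨d k, hd k⟩
    exact mem_iUnion.2 ⟨k, this⟩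
  have hcnt := hconc U hUopen hdU
  have hinU : ∀ p : ↥X, p.1 ∈ U → ∃ n, p ∈ ⋃₀ ({S (2 * n) ⟨d n, hd n⟩} : Set (Set ↥X)) := by
    intro p hp
    obtain ⟨k, hk⟩ := mem_iUnion.1 hp
    refine ⟨k, S (2 * k) ⟨d k, hd k⟩, rfl, ?_⟩
    rw [← hO2]; exact hk
  -- enumerate the countable remainder (or use a default in the empty case)
  have hrem : ∃ r : ℕ → Y, (∀ j, r j ∈ X) ∧ ∀ z ∈ X \ U, ∃ j, z = r j := by
    rcases (X \ U).eq_empty_or_nonempty with hE | hNE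
    · exact ⟨fun _ => d 0, fun _ => hd 0, fun z hz => absurd (hE ▸ hz) (notMem_empty z)⟩
    · obtain ⟨r, hr⟩ := hcnt.exists_eq_range hNE
      refine ⟨r, fun j => ?_, fun z hz => ?_⟩
      · have : r j ∈ X \ U := hr ▸ mem_range_self j
        exact this.1
      · rw [hr] at hz
        obtain ⟨j, hj⟩ := hz
        exact ⟨j, hj.symm⟩
  obtain ⟨r, hrX, hrcov⟩ := hrem
  refine ⟨fun n => if n % 2 = 0 then {S n ⟨d (n / 2), hd _⟩} else {S n ⟨r (n / 2), hrX _⟩},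
    fun n => ⟨?_, ?_⟩, ?_⟩
  · dsimp only; split <;> exact singleton_subset_iff.2 (hS1 n _)
  · dsimp only; split <;> exact finite_singleton _
  · intro p
    by_cases hpU : p.1 ∈ U
    · obtain ⟨k, hk⟩ := mem_iUnion.1 hpU
      refine ⟨2 * k, ?_⟩
      dsimp only
      have h2 : (2 * k) % 2 = 0 := by omega
      have h3 : (2 * k) / 2 = k := by omega
      rw [if_pos h2, h3]
      refine ⟨S (2 * k) ⟨d k, hd k⟩, rfl, ?_⟩
      rw [← hO2]; exact hk
    · obtain ⟨j, hj⟩ := hrcov p.1 ⟨p.2, hpU⟩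
      refine ⟨2 * j + 1, ?_⟩
      dsimp only
      have h2 : (2 * j + 1) % 2 ≠ 0 := by omega
      have h3 : (2 * j + 1) / 2 = j := by omega
      rw [if_neg h2, h3]
      refine ⟨S (2 * j + 1) ⟨r j, hrX j⟩, rfl, ?_⟩
      have : p = (⟨r j, hrX j⟩ : ↥X) := Subtype.ext hj
      rw [this]
      exact hS2 _ _


section Aux
variable {G : Type*} [TopologicalSpace G] [Group G] [IsTopologicalGroup G]

lemma residual_preimage_homeo {X Y : Type*} [TopologicalSpace X] [TopologicalSpace Y]
    (h : X ≃ₜ Y) {s : Set Y} (hs : s ∈ residual Y) : h ⁻¹' s ∈ residual X :=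
  tendsto_residual_of_isOpenMap h.continuous h.isOpenMap hs

lemma translate_cover [TopologicalSpace.SeparableSpace G] [Nonempty G]
    {U : Set G} (hU : IsOpen U) (hne : U.Nonempty) :
    ∃ d : ℕ → G, ∀ x : G, ∃ n, (d n)⁻¹ * x ∈ U := by
  refine ⟨TopologicalSpace.denseSeq G, fun x => ?_⟩
  obtain ⟨u, hu⟩ := hne
  have hopen : IsOpen ((fun z : G => x⁻¹ * z)⁻¹' U⁻¹) :=
    (hU.inv).preimage (by continuity)
  have hne2 : ((fun z : G => x⁻¹ * z)⁻¹' U⁻¹).Nonempty := ⟨x * u⁻¹, by simp [hu]⟩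
  obtain ⟨n, hn⟩ := (TopologicalSpace.denseRange_denseSeq G).exists_mem_open hopen hne2
  refine ⟨n, ?_⟩
  have : (x⁻¹ * TopologicalSpace.denseSeq G n)⁻¹ ∈ U := hn
  simpa [mul_assoc] using this

variable [TopologicalSpace.SeparableSpace G]

lemma open_nonmeager (hG : ¬ IsMeagre (univ : Set G)) {U : Set G}
    (hU : IsOpen U) (hne : U.Nonempty) : ¬ IsMeagre U := by
  intro hm
  have hNe : Nonempty G := ⟨hne.choose⟩
  obtain ⟨d, hd⟩ := translate_cover hU hne
  have hcov : (univ : Set G) ⊆ ⋃ n, (fun x => (d n)⁻¹ * x) ⁻¹' U := by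
    intro x _
    obtain ⟨n, hn⟩ := hd x
    exact mem_iUnion.2 ⟨n, hn⟩
  have : IsMeagre (⋃ n, (fun x : G => (d n)⁻¹ * x) ⁻¹' U) := by
    refine isMeagre_iUnion fun n => ?_
    have : (fun x : G => (d n)⁻¹ * x) = (Homeomorph.mulLeft ((d n)⁻¹) : G ≃ₜ G) := rfl
    exact this ▸ hm.preimage_of_isOpenMap (Homeomorph.mulLeft ((d n)⁻¹)).continuous
      (Homeomorph.mulLeft ((d n)⁻¹)).isOpenMap
  exact hG (this.mono hcov)

/-- residual sets meet every nonempty open set -/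
lemma residual_inter_open_nonempty (hG : ¬ IsMeagre (univ : Set G))
    {R U : Set G} (hR : R ∈ residual G) (hU : IsOpen U) (hne : U.Nonempty) :
    (U ∩ R).Nonempty := by
  rcases (U ∩ R).eq_empty_or_nonempty with h | h
  · exfalso
    have hsub : U ⊆ Rᶜ := fun x hx => fun hxR => (h ▸ (⟨hx, hxR⟩ : x ∈ U ∩ R) : x ∈ (∅ : Set G))
    have hRc : IsMeagre Rᶜ := by
      unfold IsMeagre
      rwa [compl_compl]
    exact open_nonmeager hG hU hne (hRc.mono hsub)
  · exact h

lemma residual_nonempty (hG : ¬ IsMeagre (univ : Set G))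
    {R : Set G} (hR : R ∈ residual G) : R.Nonempty := by
  have : Nonempty G := ⟨1⟩
  simpa using residual_inter_open_nonempty hG hR isOpen_univ univ_nonempty

/-- Pettis-type lemma: a nonmeager Baire-measurable set `A` satisfies:
there is a nonempty open `U` such that differences within `U` are realized as
differences within `A`. -/
lemma pettis (hG : ¬ IsMeagre (univ : Set G)) {A : Set G}
    (hA : BaireMeasurableSet A) (hnm : ¬ IsMeagre A) :
    ∃ U : Set G, IsOpen U ∧ U.Nonempty ∧
      ∀ g ∈ U, ∀ h ∈ U, ∃ a ∈ A, ∃ b ∈ A, a⁻¹ * b = g⁻¹ * h := by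
  obtain ⟨u, huo, hres⟩ := hA.residualEq_isOpen
  have hS : {x : G | (x ∈ A) = (x ∈ u)} ∈ residual G := hres
  have hune : u.Nonempty := by
    rcases u.eq_empty_or_nonempty with h | h
    · exfalso
      apply hnm
      have hme : IsMeagre {x : G | (x ∈ A) = (x ∈ u)}ᶜ := by
        unfold IsMeagre
        rwa [compl_compl]
      refine hme.mono (fun x hx => ?_)
      intro hxS
      have hx2 : (x ∈ A) = (x ∈ u) := hxS
      rw [h] at hx2
      exact (hx2 ▸ hx : x ∈ (∅ : Set G))
    · exact h
  refine ⟨u, huo, hune, fun g hg h hh => ?_⟩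
  set t := g⁻¹ * h with ht
  have hO : IsOpen (u ∩ (fun x : G => x * t) ⁻¹' u) :=
    huo.inter (huo.preimage (by continuity))
  have hOne : (u ∩ (fun x : G => x * t) ⁻¹' u).Nonempty := by
    refine ⟨g, hg, ?_⟩
    show g * (g⁻¹ * h) ∈ u
    simpa [mul_assoc] using hh
  have hR : ({x : G | (x ∈ A) = (x ∈ u)} ∩
      (fun x : G => x * t) ⁻¹' {x : G | (x ∈ A) = (x ∈ u)}) ∈ residual G := by
    refine inter_mem hS ?_
    have : (fun x : G => x * t) = (Homeomorph.mulRight t : G ≃ₜ G) := rfl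
    exact this ▸ residual_preimage_homeo (Homeomorph.mulRight t) hS
  obtain ⟨x, hxO, hxR⟩ := residual_inter_open_nonempty hG hR hO hOne
  have hxA : x ∈ A := by
    have : (x ∈ A) = (x ∈ u) := hxR.1
    exact this ▸ hxO.1
  have hxtA : x * t ∈ A := by
    have : (x * t ∈ A) = (x * t ∈ u) := hxR.2
    exact this ▸ hxO.2
  exact ⟨x, hxA, x * t, hxtA, by group⟩



end Aux

section Continuity
variable {C : Type*} [TopologicalSpace C] [Group C] [IsTopologicalGroup C]
  [TopologicalSpace.SeparableSpace C]
  {B : Type*} [TopologicalSpace B] [Group B] [IsTopologicalGroup B]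
  [TopologicalSpace.SeparableSpace B]

/-- Pettis' theorem: a Borel measurable homomorphism from a nonmeager separable
topological group to a separable topological group is continuous. -/
theorem continuous_of_borel_hom (hC : ¬ IsMeagre (univ : Set C)) (f : C →* B)
    (hBorel : @Measurable C B (borel C) (borel B) f) : Continuous f := by
  letI : MeasurableSpace C := borel C
  haveI : BorelSpace C := ⟨rfl⟩
  letI : MeasurableSpace B := borel B
  haveI : BorelSpace B := ⟨rfl⟩
  apply continuous_of_continuousAt_one f
  rw [ContinuousAt, map_one]
  intro W hW
  -- find open V ∋ 1 with V⁻¹ * V ⊆ W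
  have hcont : Continuous fun p : B × B => p.1⁻¹ * p.2 := by continuity
  have hpre : (fun p : B × B => p.1⁻¹ * p.2) ⁻¹' W ∈ 𝓝 ((1 : B), (1 : B)) := by
    apply hcont.continuousAt.preimage_mem_nhds
    simpa using hW
  obtain ⟨V₁, V₂, hV₁, h1V₁, hV₂, h1V₂, hsub⟩ := mem_nhds_prod_iff'.1 hpre
  set V := V₁ ∩ V₂ with hV
  have hVopen : IsOpen V := hV₁.inter hV₂
  have h1V : (1 : B) ∈ V := ⟨h1V₁, h1V₂⟩
  have hVW : ∀ v₁ ∈ V, ∀ v₂ ∈ V, v₁⁻¹ * v₂ ∈ W := fun v₁ h₁ v₂ h₂ =>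
    hsub (Set.mk_mem_prod h₁.1 h₂.2)
  -- cover B by translates of V, pull back to C
  have : Nonempty B := ⟨1⟩
  obtain ⟨d, hd⟩ := translate_cover hVopen ⟨1, h1V⟩
  set A : ℕ → Set C := fun n => f ⁻¹' ((fun b : B => (d n)⁻¹ * b) ⁻¹' V) with hA
  have hAbm : ∀ n, BaireMeasurableSet (A n) := by
    intro n
    have hop : IsOpen ((fun b : B => (d n)⁻¹ * b) ⁻¹' V) := hVopen.preimage (by continuity)
    exact (hBorel hop.measurableSet).baireMeasurableSet
  have hAcov : (univ : Set C) ⊆ ⋃ n, A n := fun x _ => by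
    obtain ⟨n, hn⟩ := hd (f x); exact mem_iUnion.2 ⟨n, hn⟩
  have hAnm : ∃ n, ¬ IsMeagre (A n) := by
    by_contra hall
    push_neg at hall
    exact hC ((isMeagre_iUnion fun n => hall n).mono hAcov)
  obtain ⟨m, hm⟩ := hAnm
  obtain ⟨U, hUo, hUne, hU⟩ := pettis hC (hAbm m) hm
  obtain ⟨u₀, hu₀⟩ := hUne
  -- N := u₀ • U is an open neighborhood of 1 inside f ⁻¹' W
  have hNopen : IsOpen ((fun x : C => u₀ * x) ⁻¹' U) := hUo.preimage (by continuity)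
  have h1N : (1 : C) ∈ (fun x : C => u₀ * x) ⁻¹' U := by simpa using hu₀
  rw [mem_map]
  refine mem_of_superset (hNopen.mem_nhds h1N) ?_
  intro x hx
  obtain ⟨a, haA, b, hbA, hab⟩ := hU u₀ hu₀ (u₀ * x) hx
  have hx' : a⁻¹ * b = x := by
    rw [hab]; group
  have hfa : (d m)⁻¹ * f a ∈ V := haA
  have hfb : (d m)⁻¹ * f b ∈ V := hbA
  have : f x = ((d m)⁻¹ * f a)⁻¹ * ((d m)⁻¹ * f b) := by
    rw [← hx']
    simp [map_mul, map_inv, mul_assoc]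
  rw [mem_preimage, this]
  exact hVW _ hfa _ hfb

end Continuity




lemma card_le_two_power_aleph0 (X : Type u) [TopologicalSpace X]
    [SecondCountableTopology X] [T1Space X] :
    Cardinal.mk X ≤ (2 : Cardinal.{u}) ^ Cardinal.aleph0 := by
  have hB := TopologicalSpace.isBasis_countableBasis X
  set enc : X → Set ↥(TopologicalSpace.countableBasis X) := fun x => {b | x ∈ (b : Set X)} with henc
  have hinj : Function.Injective enc := by
    intro x y hxy
    by_contra hne
    obtain ⟨b, hbB, hxb, hby⟩ := hB.exists_subset_of_mem_open
      (show x ∈ ({y}ᶜ : Set X) from hne) isOpen_compl_singleton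
    have : (⟨b, hbB⟩ : ↥(TopologicalSpace.countableBasis X)) ∈ enc x := hxb
    rw [hxy] at this
    exact hby this (rfl : y ∈ ({y} : Set X))
  calc Cardinal.mk X ≤ Cardinal.mk (Set ↥(TopologicalSpace.countableBasis X)) := Cardinal.mk_le_of_injective hinj
    _ = 2 ^ Cardinal.mk ↥(TopologicalSpace.countableBasis X) := Cardinal.mk_set
    _ ≤ 2 ^ Cardinal.aleph0 := by
        apply Cardinal.power_le_power_left two_ne_zero
        exact (TopologicalSpace.countable_countableBasis X).le_aleph0

lemma card_opens_le_two_power_aleph0 (X : Type u) [TopologicalSpace X]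
    [SecondCountableTopology X] :
    Cardinal.mk {V : Set X // IsOpen V} ≤ (2 : Cardinal.{u}) ^ Cardinal.aleph0 := by
  have hB := TopologicalSpace.isBasis_countableBasis X
  set enc : {V : Set X // IsOpen V} → Set ↥(TopologicalSpace.countableBasis X) :=
    fun V => {b | (b : Set X) ⊆ V.1} with henc
  have hinj : Function.Injective enc := by
    intro V W hVW
    apply Subtype.ext
    rw [hB.open_eq_sUnion' V.2, hB.open_eq_sUnion' W.2]
    apply congrArg
    ext s
    constructor
    · rintro ⟨hsB, hsub⟩
      have : (⟨s, hsB⟩ : ↥(TopologicalSpace.countableBasis X)) ∈ enc V := hsub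
      rw [hVW] at this
      exact ⟨hsB, this⟩
    · rintro ⟨hsB, hsub⟩
      have : (⟨s, hsB⟩ : ↥(TopologicalSpace.countableBasis X)) ∈ enc W := hsub
      rw [← hVW] at this
      exact ⟨hsB, this⟩
  calc Cardinal.mk _ ≤ Cardinal.mk (Set ↥(TopologicalSpace.countableBasis X)) := Cardinal.mk_le_of_injective hinj
    _ = 2 ^ Cardinal.mk ↥(TopologicalSpace.countableBasis X) := Cardinal.mk_set
    _ ≤ 2 ^ Cardinal.aleph0 := by
        apply Cardinal.power_le_power_left two_ne_zero
        exact (TopologicalSpace.countable_countableBasis X).le_aleph0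

lemma exists_surj_of_card_le {T I : Type u} [Nonempty T]
    (h : Cardinal.mk T ≤ Cardinal.mk I) : ∃ e : I → T, Function.Surjective e := by
  obtain ⟨j⟩ := (Cardinal.le_def T I).1 h
  exact ⟨Function.invFun j, Function.invFun_surjective j.injective⟩

lemma CH_transfer (h : (2 : Cardinal.{v}) ^ Cardinal.aleph0 = Cardinal.aleph 1) :
    (2 : Cardinal.{u}) ^ Cardinal.aleph0 = Cardinal.aleph 1 := by
  have h1 := congrArg (Cardinal.lift.{u, v}) h
  rw [Cardinal.lift_power, Cardinal.lift_aleph0, Cardinal.lift_aleph] at h1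
  apply Cardinal.lift_injective.{v, u}
  rw [Cardinal.lift_power, Cardinal.lift_aleph0, Cardinal.lift_aleph]
  rw [show Cardinal.lift.{u,v} (2 : Cardinal.{v}) = 2 from by simp] at h1
  rw [show Cardinal.lift.{v,u} (2 : Cardinal.{u}) = 2 from by simp]
  rw [h1]
  congr 1
  simp


section Construction
variable {G : Type u} [TopologicalSpace G] [Group G] [IsTopologicalGroup G]
  [TopologicalSpace.SeparableSpace G] [TopologicalSpace.MetrizableSpace G]

/-- Under CH, a nonmeager separable metrizable group is generated by a Menger subspace. -/
lemma exists_menger_generating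
    (hCH : (2 : Cardinal.{u}) ^ Cardinal.aleph0 = Cardinal.aleph 1)
    (hG : ¬ IsMeagre (Set.univ : Set G)) :
    ∃ X : Set G, MengerProp ↥X ∧ Subgroup.closure X = ⊤ := by
  haveI : Nonempty G := ⟨1⟩
  haveI hsc : SecondCountableTopology G := by
    letI := TopologicalSpace.metrizableSpaceMetric G
    exact UniformSpace.secondCountable_of_separable G
  haveI ht1 : T1Space G := by
    letI := TopologicalSpace.metrizableSpaceMetric G
    infer_instance
  set D : Set G := Set.range (TopologicalSpace.denseSeq G) with hD
  have hDdense : Dense D := TopologicalSpace.denseRange_denseSeq G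
  set ι := (Cardinal.aleph 1 : Cardinal.{u}).ord.ToType with hι
  have hcardι : Cardinal.mk ι = Cardinal.aleph 1 := Cardinal.mk_ord_toType _
  -- surjection onto the group
  obtain ⟨e, he⟩ : ∃ e : ι → G, Function.Surjective e := by
    apply exists_surj_of_card_le
    rw [hcardι, ← hCH]
    exact card_le_two_power_aleph0 G
  -- surjection onto open supersets of D
  haveI : Nonempty {V : Set G // IsOpen V ∧ D ⊆ V} := ⟨⟨univ, isOpen_univ, subset_univ D⟩⟩
  obtain ⟨u, hu⟩ : ∃ u : ι → {V : Set G // IsOpen V ∧ D ⊆ V}, Function.Surjective u := by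
    apply exists_surj_of_card_le
    rw [hcardι, ← hCH]
    calc Cardinal.mk {V : Set G // IsOpen V ∧ D ⊆ V}
        ≤ Cardinal.mk {V : Set G // IsOpen V} :=
          Cardinal.mk_le_of_injective
            (f := fun V => (⟨V.1, V.2.1⟩ : {V : Set G // IsOpen V}))
            (by intro V W h
                simp only [Subtype.mk.injEq] at h
                exact Subtype.ext h)
      _ ≤ _ := card_opens_le_two_power_aleph0 G
  have hIio : ∀ α : ι, (Set.Iio α).Countable := fun α =>
    (Cardinal.countable_iff_lt_aleph_one _).2 (Cardinal.mk_Iio_ord_toType α)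
  set W : ι → Set G := fun α => ⋂ β ∈ Set.Iio α, (u β).1 with hW
  have hWres : ∀ α, W α ∈ residual G := by
    intro α
    refine (countable_bInter_mem (hIio α)).2 fun β _ => ?_
    exact residual_of_dense_open (u β).2.1 (hDdense.mono (u β).2.2)
  have hT : ∀ α : ι, (W α ∩ (fun z : G => z⁻¹ * e α) ⁻¹' (W α)).Nonempty := by
    intro α
    apply residual_nonempty hG
    refine inter_mem (hWres α) ?_
    have hhom : (fun z : G => z⁻¹ * e α)
        = ((Homeomorph.inv G).trans (Homeomorph.mulRight (e α)) : G ≃ₜ G) := rfl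
    exact hhom ▸ residual_preimage_homeo _ (hWres α)
  set x : ι → G := fun α => (hT α).choose with hx
  have hxW : ∀ α, x α ∈ W α := fun α => (hT α).choose_spec.1
  have hyW : ∀ α, (x α)⁻¹ * e α ∈ W α := fun α => (hT α).choose_spec.2
  set y : ι → G := fun α => (x α)⁻¹ * e α with hy
  set X : Set G := D ∪ (Set.range x ∪ Set.range y) with hX
  have hWsub : ∀ {α γ : ι}, γ < α → W α ⊆ (u γ).1 := fun {α γ} hγ =>
    Set.biInter_subset_of_mem hγ
  refine ⟨X, ?_, ?_⟩
  · -- Menger via concentration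
    apply mengerProp_of_concentrated X (TopologicalSpace.denseSeq G)
      (fun k => Or.inl ⟨k, rfl⟩)
    intro U hUo hdU
    have hDU : D ⊆ U := Set.range_subset_iff.2 hdU
    obtain ⟨γ, hγ⟩ := hu ⟨U, hUo, hDU⟩
    have hγU : (u γ).1 = U := congrArg Subtype.val hγ
    have hsub : X \ U ⊆ x '' Set.Iic γ ∪ y '' Set.Iic γ := by
      rintro z ⟨hzX, hzU⟩
      rcases hzX with hzD | hzxy
      · exact absurd (hDU hzD) hzU
      rcases hzxy with ⟨α, rfl⟩ | ⟨α, rfl⟩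
      · refine Or.inl ⟨α, ?_, rfl⟩
        by_contra hlt
        exact hzU (hγU ▸ hWsub (not_le.1 hlt) (hxW α))
      · refine Or.inr ⟨α, ?_, rfl⟩
        by_contra hlt
        exact hzU (hγU ▸ hWsub (not_le.1 hlt) (hyW α))
    have hIic : (Set.Iic γ).Countable := by
      have : Set.Iic γ = Set.Iio γ ∪ {γ} := by
        ext z; simp [le_iff_lt_or_eq]
      rw [this]
      exact (hIio γ).union (Set.countable_singleton γ)
    exact (((hIic.image x).union (hIic.image y)).mono hsub)
  · -- generation
    rw [eq_top_iff]
    intro c _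
    obtain ⟨α, rfl⟩ := he c
    have : e α = x α * y α := by rw [hy]; group
    rw [this]
    exact Subgroup.mul_mem _
      (Subgroup.subset_closure (Or.inr (Or.inl ⟨α, rfl⟩)))
      (Subgroup.subset_closure (Or.inr (Or.inr ⟨α, rfl⟩)))

end Construction

/-- Under CH, a separable metrizable group which is a surjective Borel homomorphic
image of a nonmeager separable metrizable group is generated by a subspace with
the Menger property. -/
theorem stmt_10 (hCH : (2 : Cardinal) ^ Cardinal.aleph0 = Cardinal.aleph 1)
    (C : Type u) [TopologicalSpace C] [Group C] [IsTopologicalGroup C]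
    [TopologicalSpace.SeparableSpace C] [TopologicalSpace.MetrizableSpace C]
    (hC : ¬ IsMeagre (Set.univ : Set C))
    (B : Type u) [TopologicalSpace B] [Group B] [IsTopologicalGroup B]
    [TopologicalSpace.SeparableSpace B] [TopologicalSpace.MetrizableSpace B]
    (f : C →* B) (hsurj : Function.Surjective f)
    (hBorel : @Measurable C B (borel C) (borel B) f) :
    ∃ X : Set B, MengerProp ↥X ∧ Subgroup.closure X = ⊤ := by
  -- f is continuous by Pettis' theorem
  have hcont : Continuous f := continuous_of_borel_hom hC f hBorel
  -- C is generated by a Menger subspace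
  obtain ⟨Y, hYmenger, hYgen⟩ := exists_menger_generating (CH_transfer hCH) hC
  refine ⟨f '' Y, ?_, ?_⟩
  · -- Menger is preserved by continuous images
    refine hYmenger.image (g := fun p : ↥Y => (⟨f p.1, ⟨p.1, p.2, rfl⟩⟩ : ↥(f '' Y))) ?_ ?_
    · exact (hcont.comp continuous_subtype_val).subtype_mk _
    · rintro ⟨_, q, hq, rfl⟩
      exact ⟨⟨q, hq⟩, rfl⟩
  · rw [← MonoidHom.map_closure, hYgen]
    rw [← MonoidHom.range_eq_map]
    exact (MonoidHom.range_eq_top).2 hsurj
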